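/- If v ∈ P_q and |v| ≤ |q| - |q_0|, where q_0 is the shortest element of P_q, then v is a power of q_0. -/
import Mathlib


/-- `u ^ n` for lists: concatenation of `n` copies of `u`. -/
def listPow {X : Type*} (u : List X) : ℕ → List X
  | 0 => []
  | n+1 => u ++ listPow u n

/-- `P_q = { v : e ⊏ v ⊑ q ⊏ v·q }`. -/
def Pq {X : Type*} (q : List X) : Set (List X) :=
  {v | v ≠ [] ∧ v <+: q ∧ q <+: v ++ q}

/-- membership in the submonoid `P^*` generated by `P`. -/
def InStar {X : Type*} (P : Set (List X)) (w : List X) : Prop :=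
  ∃ l : List (List X), (∀ v ∈ l, v ∈ P) ∧ w = l.flatten

/-- A finite word `w` is quasiperiodic with quasiperiod `q`. -/
def QuasiPeriodic {X : Type*} (q w : List X) : Prop :=
  ∀ j < w.length, ∃ u : List X, u.length ≤ j ∧ j < u.length + q.length ∧ (u ++ q) <+: w

/-- `Q_q`: the set of finite words quasiperiodic with quasiperiod `q`. -/
def Qq {X : Type*} (q : List X) : Set (List X) := {w | QuasiPeriodic q w}

/-- `u` is a (finite) prefix of the infinite word `ξ`. -/
def InfPrefix {X : Type*} (ξ : ℕ → X) (u : List X) : Prop :=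
  u = (List.range u.length).map ξ

/-- An infinite word `ξ` is quasiperiodic with quasiperiod `q`. -/
def QuasiPeriodicInf {X : Type*} (q : List X) (ξ : ℕ → X) : Prop :=
  ∀ j : ℕ, ∃ u : List X, u.length ≤ j ∧ j < u.length + q.length ∧ InfPrefix ξ (u ++ q)

/-- the star root `P \ (P²·P*)`. -/
def StarRoot {X : Type*} (P : Set (List X)) : Set (List X) :=
  {v | v ∈ P ∧ ¬ ∃ (a b : List X) (l : List (List X)),
    a ∈ P ∧ b ∈ P ∧ (∀ x ∈ l, x ∈ P) ∧ v = a ++ b ++ l.flatten}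

/-- `ξ ∈ P^ω`: infinite concatenation of nonempty words of `P`. -/
def InOmega {X : Type*} (P : Set (List X)) (ξ : ℕ → X) : Prop :=
  ∃ f : ℕ → List X, (∀ i, f i ∈ P ∧ f i ≠ []) ∧
    ∀ n, InfPrefix ξ ((List.range n).map f).flatten

private lemma per_of_prefix {X : Type*} {q w : List X} (h : q <+: w ++ q) :
    ∀ i, i + w.length < q.length → q[i + w.length]? = q[i]? := by
  intro i hi
  have h1 : q[i + w.length]? = (w ++ q)[i + w.length]? := by
    conv_lhs => rw [List.prefix_iff_eq_take.mp h]
    rw [List.getElem?_take_of_lt hi]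
  rw [h1, List.getElem?_append_right (by omega)]
  congr 1; omega

private lemma prefix_of_per {X : Type*} {q w : List X} (hw : w <+: q)
    (h : ∀ i, i + w.length < q.length → q[i + w.length]? = q[i]?) : q <+: w ++ q := by
  rw [List.prefix_iff_eq_take]
  apply List.ext_getElem?
  intro n
  by_cases hn : n < q.length
  · rw [List.getElem?_take_of_lt hn]
    by_cases hnw : n < w.length
    · rw [List.getElem?_append_left hnw, List.prefix_iff_eq_take.mp hw,
        List.getElem?_take_of_lt hnw]
    · rw [List.getElem?_append_right (by omega)]
      have := h (n - w.length) (by omega)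
      rw [show n - w.length + w.length = n by omega] at this
      exact this
  · rw [List.getElem?_eq_none (by omega), List.getElem?_eq_none (by simp; omega)]

private lemma per_sub {X : Type*} {q : List X} {p p0 : ℕ}
    (h0 : ∀ i, i + p0 < q.length → q[i + p0]? = q[i]?)
    (h : ∀ i, i + p < q.length → q[i + p]? = q[i]?)
    (hle : p0 ≤ p) (hsum : p + p0 ≤ q.length) :
    ∀ i, i + (p - p0) < q.length → q[i + (p - p0)]? = q[i]? := by
  intro i hi
  by_cases hc : i + p < q.length
  · have e1 := h0 (i + (p - p0)) (by omega)
    rw [show i + (p - p0) + p0 = i + p by omega] at e1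
    rw [← e1, h i hc]
  · have hp0i : p0 ≤ i := by omega
    have e1 := h0 (i - p0) (by omega)
    rw [show i - p0 + p0 = i by omega] at e1
    have e2 := h (i - p0) (by omega)
    rw [show i - p0 + p = i + (p - p0) by omega] at e2
    rw [e2, e1]

private lemma stmt10_aux {X : Type*} (q : List X) (q0 : List X)
    (h0q : q0 <+: q) (h0per : q <+: q0 ++ q) (h0ne : q0 ≠ [])
    (hmin : ∀ v ∈ Pq q, q0.length ≤ v.length) :
    ∀ n : ℕ, ∀ v : List X, v.length ≤ n → v ∈ Pq q →
      v.length + q0.length ≤ q.length → ∃ m : ℕ, v = listPow q0 m := by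
  have hp0 : 0 < q0.length := List.length_pos_iff.mpr h0ne
  intro n
  induction n with
  | zero =>
    intro v hn hv _
    exact absurd (List.length_eq_zero_iff.mp (Nat.le_zero.mp hn)) hv.1
  | succ n ih =>
    intro v hn hv hlen
    obtain ⟨hvne, hvq, hvper⟩ := hv
    have hle : q0.length ≤ v.length := hmin v ⟨hvne, hvq, hvper⟩
    have hq0v : q0 <+: v := List.prefix_of_prefix_length_le h0q hvq hle
    obtain ⟨t, ht⟩ := hq0v
    have htlen : t.length = v.length - q0.length := by
      have := congrArg List.length ht
      simp at this; omega
    by_cases htne : t = []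
    · refine ⟨1, ?_⟩
      simp [listPow, ← ht, htne]
    · -- t ∈ Pq q
      have htq : t <+: q := by
        have h1 : v.drop q0.length <+: q.drop q0.length := hvq.drop q0.length
        have h2 : v.drop q0.length = t := by rw [← ht, List.drop_left]
        have h3 : q.drop q0.length <+: q := by
          have := h0per.drop q0.length
          rwa [List.drop_left] at this
        rw [h2] at h1
        exact h1.trans h3
      have htper : q <+: t ++ q := by
        apply prefix_of_per htq
        have key := per_sub (per_of_prefix h0per) (per_of_prefix hvper) hle
          (by omega)
        rw [htlen]
        exact key
      obtain ⟨m, hm⟩ := ih t (by omega) ⟨htne, htq, htper⟩ (by omega)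
      exact ⟨m + 1, by rw [← ht, hm]; rfl⟩


/-- If `v ∈ P_q` and `|v| ≤ |q| - |q₀|` then `v` is a power of `q₀`. -/
theorem stmt10 {X : Type*} (q : List X) (hq : q ≠ []) (q0 : List X)
    (h0 : q0 ∈ Pq q) (hmin : ∀ v ∈ Pq q, q0.length ≤ v.length)
    (v : List X) (hv : v ∈ Pq q) (hlen : v.length + q0.length ≤ q.length) :
    ∃ m : ℕ, v = listPow q0 m := by
  exact stmt10_aux q q0 h0.2.1 h0.2.2 h0.1 hmin v.length v le_rfl hv hlen
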